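/- For every integer a and all natural numbers c, d with c + d ≥ 1, the (c+d+1) × (c+d+1) complex matrix H = 2πi·M is invertible (its determinant is nonzero), where M has (0,0) entry (c+d)·i − (c−d)/2 + 2a, entries i in all remaining positions of the first row and first column, entries 2i on the remaining diagonal positions, and 0 elsewhere. (H is the Hessian of the potential function Φ^{(1,1);a,c,d} at its critical point (1/2, 1/4, …, 1/4).) -/
import Mathlib


open Real

theorem stmt_13 (a : ℤ) (c d : ℕ) (hcd : 1 ≤ c + d)
    (M : Matrix (Fin (c + d + 1)) (Fin (c + d + 1)) ℂ)
    (h00 : M 0 0 = ((c + d : ℕ) : ℂ) * Complex.I - ((c : ℂ) - (d : ℂ)) / 2 + 2 * (a : ℂ))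
    (h0j : ∀ j : Fin (c + d + 1), j ≠ 0 → M 0 j = Complex.I)
    (hj0 : ∀ j : Fin (c + d + 1), j ≠ 0 → M j 0 = Complex.I)
    (hjj : ∀ j : Fin (c + d + 1), j ≠ 0 → M j j = 2 * Complex.I)
    (hij : ∀ i j : Fin (c + d + 1), i ≠ j → i ≠ 0 → j ≠ 0 → M i j = 0) :
    ((2 * (π:ℂ) * Complex.I) • M).det ≠ 0 := by
  rw [Matrix.det_smul]
  apply mul_ne_zero
  · apply pow_ne_zero
    simp [Complex.ext_iff, Real.pi_ne_zero]
  · intro hdet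
    obtain ⟨v, hv, hMv⟩ := Matrix.exists_mulVec_eq_zero_iff.mpr hdet
    have hrow : ∀ k, ∑ l, M k l * v l = 0 := by
      intro k
      have := congrFun hMv k
      simpa [Matrix.mulVec, dotProduct] using this
    have hvj : ∀ j : Fin (c + d + 1), j ≠ 0 → v j = -(v 0) / 2 := by
      intro j hj
      have h := hrow j
      have hsum : ∑ l, M j l * v l = M j 0 * v 0 + M j j * v j := by
        rw [← Finset.add_sum_erase _ _ (Finset.mem_univ 0)]
        congr 1
        rw [Finset.sum_eq_single_of_mem j (Finset.mem_erase.mpr ⟨hj, Finset.mem_univ j⟩)]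
        intro b hb hbj
        rcases Finset.mem_erase.mp hb with ⟨hb0, _⟩
        rw [hij j b (Ne.symm hbj) hj hb0, zero_mul]
      rw [hsum, hj0 j hj, hjj j hj] at h
      have h2 : Complex.I * (v 0 + 2 * v j) = 0 := by linear_combination h
      have h3 := (mul_eq_zero.mp h2).resolve_left Complex.I_ne_zero
      linear_combination h3 / 2
    -- row 0
    have h0 := hrow 0
    have hcard : (Finset.univ.erase (0 : Fin (c + d + 1))).card = c + d := by
      rw [Finset.card_erase_of_mem (Finset.mem_univ _)]
      simp
    have hsum0 : ∑ l, M 0 l * v l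
        = M 0 0 * v 0 + ((c + d : ℕ) : ℂ) * (Complex.I * (-(v 0) / 2)) := by
      rw [← Finset.add_sum_erase _ _ (Finset.mem_univ 0)]
      congr 1
      rw [Finset.sum_congr rfl (fun b hb => ?_), Finset.sum_const, hcard, nsmul_eq_mul]
      rcases Finset.mem_erase.mp hb with ⟨hb0, _⟩
      rw [h0j b hb0, hvj b hb0]
    rw [hsum0, h00] at h0
    have hne : (((c + d : ℕ) : ℂ) * Complex.I - ((c : ℂ) - (d : ℂ)) / 2 + 2 * (a : ℂ))
        - ((c + d : ℕ) : ℂ) * Complex.I / 2 ≠ 0 := by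
      intro h
      have him := congrArg Complex.im h
      simp at him
      have h1 : ((c : ℝ) + d) = 0 := by linarith
      have h2 : c + d = 0 := by exact_mod_cast h1
      omega
    have hv0 : v 0 = 0 := by
      rcases mul_eq_zero.mp (show ((((c + d : ℕ) : ℂ) * Complex.I - ((c : ℂ) - (d : ℂ)) / 2
          + 2 * (a : ℂ)) - ((c + d : ℕ) : ℂ) * Complex.I / 2) * v 0 = 0 by
        linear_combination h0) with h | h
      · exact absurd h hne
      · exact h
    apply hv
    funext j
    by_cases hj : j = 0
    · simpa [hj] using hv0
    · simp [hvj j hj, hv0]
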